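/- For every integer sequence X, if sum_width_decreasing_sequence(X) = sum_width_zigzag(X), then this common value is even; equivalently, there is no integer sequence X with sum_width_decreasing_sequence(X) odd and sum_width_decreasing_sequence(X) = sum_width_zigzag(X). -/

import Mathlib

/-- The signature of an integer sequence: the word over `{<,=,>}` (encoded as
`Ordering.lt`, `Ordering.eq`, `Ordering.gt`) comparing consecutive elements. -/
def signature (X : List ℤ) : List Ordering :=
  List.zipWith compare X X.tail

/-- The factor `w_i ⋯ w_j` of a word `w` (positions indexed from `0`). -/
def factor (w : List Ordering) (i j : ℕ) : List Ordering :=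
  (w.drop i).take (j + 1 - i)

/-- The factor `w_i ⋯ w_j` of `w` is an occurrence of the language `L`. -/
def IsOcc (L : Set (List Ordering)) (w : List Ordering) (i j : ℕ) : Prop :=
  i ≤ j ∧ j < w.length ∧ factor w i j ∈ L

/-- The factor `w_i ⋯ w_j` is a maximal occurrence of `L` in `w`: it is an
occurrence, and no strictly larger factor `w_{i'} ⋯ w_{j'}` with `i' ≤ i` and
`j ≤ j'` is an occurrence of `L`. -/
def IsMaxOcc (L : Set (List Ordering)) (w : List Ordering) (i j : ℕ) : Prop :=
  IsOcc L w i j ∧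
    ∀ i' j', i' ≤ i → j ≤ j' → (i', j') ≠ (i, j) → ¬ IsOcc L w i' j'

/-- The number of maximal occurrences of the language `L` in the word `w`. -/
noncomputable def nbOcc (L : Set (List Ordering)) (w : List Ordering) : ℕ :=
  {p : ℕ × ℕ | IsMaxOcc L w p.1 p.2}.ncard

/-- The sum, over all maximal occurrences `w_i ⋯ w_j` of `L` in `w`, of the
width `wid i j` of the occurrence (`0` if there are none). -/
noncomputable def sumWidth (L : Set (List Ordering)) (wid : ℕ → ℕ → ℕ)
    (w : List Ordering) : ℕ :=
  ∑ᶠ p ∈ {p : ℕ × ℕ | IsMaxOcc L w p.1 p.2}, wid p.1 p.2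

/-- The language of `DECREASING_SEQUENCE = (>(>|=)*)*>`: the nonempty words
over `{>,=}` that begin and end with `>`. -/
def DecreasingSequenceLang : Set (List Ordering) :=
  {w | w ≠ [] ∧ (∀ a ∈ w, a = Ordering.gt ∨ a = Ordering.eq) ∧
    w.head? = some Ordering.gt ∧ w.getLast? = some Ordering.gt}

/-- `sum_width_decreasing_sequence(X)`: each maximal occurrence `S_i ⋯ S_j` of
`DECREASING_SEQUENCE` in the signature of `X` contributes width `j − i + 2`. -/
noncomputable def sumWidthDecreasingSequence (X : List ℤ) : ℕ :=
  sumWidth DecreasingSequenceLang (fun i j => j - i + 2) (signature X)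

/-- The language of `ZIGZAG = (<>)⁺<(>|ε) | (><)⁺>(<|ε)`: the strictly
alternating words over `{<,>}` of length at least `3`. -/
def ZigzagLang : Set (List Ordering) :=
  {w | 3 ≤ w.length ∧ ∀ k : ℕ, k + 1 < w.length →
    (w[k]? = some Ordering.lt ∧ w[k + 1]? = some Ordering.gt) ∨
    (w[k]? = some Ordering.gt ∧ w[k + 1]? = some Ordering.lt)}

/-- `sum_width_zigzag(X)`: each maximal occurrence `S_i ⋯ S_j` of `ZIGZAG`
in the signature of `X` contributes width `j − i`. -/
noncomputable def sumWidthZigzag (X : List ℤ) : ℕ :=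
  sumWidth ZigzagLang (fun i j => j - i) (signature X)

lemma factor_length (w : List Ordering) {i j : ℕ} (hj : j < w.length) :
    (factor w i j).length = j + 1 - i := by
  simp [factor]; omega

lemma factor_getElem? (w : List Ordering) (i j k : ℕ) (hk : k < j + 1 - i) :
    (factor w i j)[k]? = w[i + k]? := by
  simp [factor, List.getElem?_take, hk, List.getElem?_drop]

lemma factor_getElem?' (w : List Ordering) {i j k : ℕ} (h1 : i ≤ k) (h2 : k ≤ j) :
    (factor w i j)[k - i]? = w[k]? := by
  have := factor_getElem? w i j (k - i) (by omega)
  rwa [show i + (k - i) = k by omega] at this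

lemma isOcc_dec_iff {w : List Ordering} {i j : ℕ} :
    IsOcc DecreasingSequenceLang w i j ↔
      i ≤ j ∧ j < w.length ∧ w[i]? = some Ordering.gt ∧ w[j]? = some Ordering.gt ∧
      ∀ k, i ≤ k → k ≤ j → (w[k]? = some Ordering.gt ∨ w[k]? = some Ordering.eq) := by
  constructor
  · rintro ⟨hij, hj, hne, hall, hhead, hlast⟩
    have hlen : (factor w i j).length = j + 1 - i := factor_length w hj
    have hhd : w[i]? = some Ordering.gt := by
      rw [List.head?_eq_getElem?] at hhead
      rwa [show (0:ℕ) = i - i by omega, factor_getElem?' w le_rfl hij] at hhead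
    have hlst : w[j]? = some Ordering.gt := by
      rw [List.getLast?_eq_getElem?, hlen] at hlast
      rwa [show j + 1 - i - 1 = j - i by omega, factor_getElem?' w hij le_rfl] at hlast
    refine ⟨hij, hj, hhd, hlst, fun k hik hkj => ?_⟩
    have hk : k - i < (factor w i j).length := by omega
    have hmem : (factor w i j)[k - i] ∈ factor w i j := List.getElem_mem hk
    have hget : w[k]? = some ((factor w i j)[k - i]) := by
      rw [← factor_getElem?' w hik hkj]
      exact (List.getElem?_eq_getElem hk)
    rcases hall _ hmem with h | h <;> [left; right] <;> rw [hget, h]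
  · rintro ⟨hij, hj, hhd, hlst, hmid⟩
    have hlen : (factor w i j).length = j + 1 - i := factor_length w hj
    refine ⟨hij, hj, ?_, ?_, ?_, ?_⟩
    · intro h; rw [h] at hlen; simp at hlen; omega
    · intro a ha
      obtain ⟨m, hm⟩ := List.mem_iff_getElem?.mp ha
      have hmlt : m < j + 1 - i := by
        by_contra hc
        rw [List.getElem?_eq_none (by omega)] at hm; exact absurd hm (by simp)
      rw [factor_getElem? w i j m hmlt] at hm
      rcases hmid (i + m) (by omega) (by omega) with h | h <;>
        [left; right] <;> (rw [hm] at h; exact Option.some.inj h)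
    · rw [List.head?_eq_getElem?, show (0:ℕ) = i - i by omega,
        factor_getElem?' w le_rfl hij]; exact hhd
    · rw [List.getLast?_eq_getElem?, hlen, show j + 1 - i - 1 = j - i by omega,
        factor_getElem?' w hij le_rfl]; exact hlst

lemma isOcc_zig_iff {w : List Ordering} {i j : ℕ} :
    IsOcc ZigzagLang w i j ↔
      i + 2 ≤ j ∧ j < w.length ∧
      ∀ k, i ≤ k → k < j →
        (w[k]? = some Ordering.lt ∧ w[k + 1]? = some Ordering.gt) ∨
        (w[k]? = some Ordering.gt ∧ w[k + 1]? = some Ordering.lt) := by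
  constructor
  · rintro ⟨hij, hj, h3, halt⟩
    have hlen : (factor w i j).length = j + 1 - i := factor_length w hj
    rw [hlen] at h3
    refine ⟨by omega, hj, fun k hik hkj => ?_⟩
    have := halt (k - i) (by omega)
    rw [factor_getElem?' w hik (by omega),
      show k - i + 1 = (k+1) - i by omega,
      factor_getElem?' w (by omega : i ≤ k + 1) (by omega)] at this
    exact this
  · rintro ⟨hij, hj, halt⟩
    have hlen : (factor w i j).length = j + 1 - i := factor_length w hj
    refine ⟨by omega, hj, by rw [hlen]; omega, fun k hk => ?_⟩
    rw [hlen] at hk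
    have := halt (i + k) (by omega) (by omega)
    rw [show i + k + 1 = i + (k+1) by omega] at this
    rwa [← factor_getElem? w i j k (by omega),
      ← factor_getElem? w i j (k+1) (by omega)] at this

lemma dec_restrict {w : List Ordering} {i' j' i j : ℕ}
    (h' : IsOcc DecreasingSequenceLang w i' j') (h : IsOcc DecreasingSequenceLang w i j)
    (h1 : i' ≤ i) (h2 : j ≤ j') :
    IsOcc DecreasingSequenceLang w i' j ∧ IsOcc DecreasingSequenceLang w i j' := by
  rw [isOcc_dec_iff] at h' h ⊢
  rw [isOcc_dec_iff]
  obtain ⟨a', b', c', d', e'⟩ := h'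
  obtain ⟨a, b, c, d, e⟩ := h
  exact ⟨⟨by omega, by omega, c', d, fun k hk1 hk2 => e' k (by omega) (by omega)⟩,
    ⟨by omega, by omega, c, d', fun k hk1 hk2 => e' k (by omega) (by omega)⟩⟩

lemma zig_restrict {w : List Ordering} {i' j' i j : ℕ}
    (h' : IsOcc ZigzagLang w i' j') (h : IsOcc ZigzagLang w i j)
    (h1 : i' ≤ i) (h2 : j ≤ j') :
    IsOcc ZigzagLang w i' j ∧ IsOcc ZigzagLang w i j' := by
  rw [isOcc_zig_iff] at h' h ⊢
  rw [isOcc_zig_iff]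
  obtain ⟨a', b', e'⟩ := h'
  obtain ⟨a, b, e⟩ := h
  exact ⟨⟨by omega, by omega, fun k hk1 hk2 => e' k (by omega) (by omega)⟩,
    ⟨by omega, by omega, fun k hk1 hk2 => e' k (by omega) (by omega)⟩⟩

lemma exists_isMaxOcc {L : Set (List Ordering)} {w : List Ordering}
    (Hres : ∀ {i' j' i j : ℕ}, IsOcc L w i' j' → IsOcc L w i j → i' ≤ i → j ≤ j' →
      IsOcc L w i' j ∧ IsOcc L w i j')
    {i j : ℕ} (h : IsOcc L w i j) :
    ∃ i0 j0, IsMaxOcc L w i0 j0 ∧ i0 ≤ i ∧ j ≤ j0 := by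
  classical
  have hex : ∃ i', IsOcc L w i' j := ⟨i, h⟩
  set i0 := Nat.find hex with hi0def
  have h0 : IsOcc L w i0 j := Nat.find_spec hex
  have hi0i : i0 ≤ i := Nat.find_min' hex h
  have hjn : j ≤ w.length := le_of_lt h.2.1
  set Q : ℕ → Prop := fun j' => IsOcc L w i0 j' with hQdef
  set j0 := Nat.findGreatest Q w.length with hj0def
  have hQ0 : Q j0 := Nat.findGreatest_spec hjn h0
  have hjj0 : j ≤ j0 := Nat.le_findGreatest hjn h0
  refine ⟨i0, j0, ⟨hQ0, ?_⟩, hi0i, hjj0⟩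
  intro i'' j'' h1 h2 hne hocc
  have hb : IsOcc L w i0 j'' := (Hres hocc hQ0 h1 h2).2
  have ha : IsOcc L w i'' j0 := (Hres hocc hQ0 h1 h2).1
  have hij'' : IsOcc L w i'' j := (Hres ha h0 h1 hjj0).1
  have hle : i0 ≤ i'' := Nat.find_min' hex hij''
  have hii : i'' = i0 := le_antisymm h1 hle
  have hjle : j'' ≤ j0 := Nat.le_findGreatest (le_of_lt hb.2.1) hb
  apply hne
  rw [Prod.mk.injEq]
  exact ⟨hii, le_antisymm hjle h2⟩

lemma dec_glue {w : List Ordering} {i1 j1 i2 j2 : ℕ}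
    (h1 : IsOcc DecreasingSequenceLang w i1 j1) (h2 : IsOcc DecreasingSequenceLang w i2 j2)
    (h12 : i1 ≤ i2) (hov : i2 ≤ j1 + 1) :
    IsOcc DecreasingSequenceLang w i1 (max j1 j2) := by
  rw [isOcc_dec_iff] at h1 h2 ⊢
  obtain ⟨a1, b1, c1, d1, e1⟩ := h1
  obtain ⟨a2, b2, c2, d2, e2⟩ := h2
  refine ⟨le_trans a1 (le_max_left _ _), max_lt b1 b2, c1, ?_, ?_⟩
  · rcases le_total j2 j1 with h | h
    · rw [max_eq_left h]; exact d1
    · rw [max_eq_right h]; exact d2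
  · intro k hk1 hk2
    rw [le_max_iff] at hk2
    by_cases hkj : k ≤ j1
    · exact e1 k hk1 hkj
    · exact e2 k (by omega) (by omega)

lemma zig_glue {w : List Ordering} {i1 j1 i2 j2 : ℕ}
    (h1 : IsOcc ZigzagLang w i1 j1) (h2 : IsOcc ZigzagLang w i2 j2)
    (h12 : i1 ≤ i2) (hov : i2 ≤ j1) :
    IsOcc ZigzagLang w i1 (max j1 j2) := by
  rw [isOcc_zig_iff] at h1 h2 ⊢
  obtain ⟨a1, b1, e1⟩ := h1
  obtain ⟨a2, b2, e2⟩ := h2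
  refine ⟨le_trans a1 (le_max_left _ _), max_lt b1 b2, ?_⟩
  intro k hk1 hk2
  rw [lt_max_iff] at hk2
  by_cases hkj : k < j1
  · exact e1 k hk1 hkj
  · exact e2 k (by omega) (by omega)

lemma maxOcc_disjoint_aux_dec {w : List Ordering} {i1 j1 i2 j2 k : ℕ}
    (h1 : IsMaxOcc DecreasingSequenceLang w i1 j1)
    (h2 : IsMaxOcc DecreasingSequenceLang w i2 j2)
    (hne : (i1, j1) ≠ (i2, j2)) (h12 : i1 ≤ i2)
    (hk1 : i1 ≤ k ∧ k ≤ j1 + 1) (hk2 : i2 ≤ k ∧ k ≤ j2 + 1) : False := by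
  have hg : IsOcc DecreasingSequenceLang w i1 (max j1 j2) :=
    dec_glue h1.1 h2.1 h12 (by omega)
  rcases eq_or_ne (i1, max j1 j2) (i2, j2) with he | he
  · rw [Prod.mk.injEq] at he
    have hj12 : j1 ≤ j2 := by have := le_max_left j1 j2; omega
    exact h1.2 i2 j2 (by omega) hj12 (Ne.symm hne) h2.1
  · exact h2.2 i1 (max j1 j2) h12 (le_max_right _ _) he hg

lemma maxOcc_disjoint_aux_zig {w : List Ordering} {i1 j1 i2 j2 k : ℕ}
    (h1 : IsMaxOcc ZigzagLang w i1 j1)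
    (h2 : IsMaxOcc ZigzagLang w i2 j2)
    (hne : (i1, j1) ≠ (i2, j2)) (h12 : i1 ≤ i2)
    (hk1 : i1 + 1 ≤ k ∧ k ≤ j1) (hk2 : i2 + 1 ≤ k ∧ k ≤ j2) : False := by
  have hg : IsOcc ZigzagLang w i1 (max j1 j2) :=
    zig_glue h1.1 h2.1 h12 (by omega)
  rcases eq_or_ne (i1, max j1 j2) (i2, j2) with he | he
  · rw [Prod.mk.injEq] at he
    have hj12 : j1 ≤ j2 := by have := le_max_left j1 j2; omega
    exact h1.2 i2 j2 (by omega) hj12 (Ne.symm hne) h2.1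
  · exact h2.2 i1 (max j1 j2) h12 (le_max_right _ _) he hg

lemma maxDec_disjoint {w : List Ordering} {i1 j1 i2 j2 : ℕ}
    (h1 : IsMaxOcc DecreasingSequenceLang w i1 j1)
    (h2 : IsMaxOcc DecreasingSequenceLang w i2 j2)
    (hne : (i1, j1) ≠ (i2, j2)) :
    Disjoint (Finset.Icc i1 (j1 + 1)) (Finset.Icc i2 (j2 + 1)) := by
  rw [Finset.disjoint_left]
  intro k hk1 hk2
  rw [Finset.mem_Icc] at hk1 hk2
  rcases le_total i1 i2 with h | h
  · exact maxOcc_disjoint_aux_dec h1 h2 hne h hk1 hk2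
  · exact maxOcc_disjoint_aux_dec h2 h1 (Ne.symm hne) h hk2 hk1

lemma maxZig_disjoint {w : List Ordering} {i1 j1 i2 j2 : ℕ}
    (h1 : IsMaxOcc ZigzagLang w i1 j1)
    (h2 : IsMaxOcc ZigzagLang w i2 j2)
    (hne : (i1, j1) ≠ (i2, j2)) :
    Disjoint (Finset.Icc (i1 + 1) j1) (Finset.Icc (i2 + 1) j2) := by
  rw [Finset.disjoint_left]
  intro k hk1 hk2
  rw [Finset.mem_Icc] at hk1 hk2
  rcases le_total i1 i2 with h | h
  · exact maxOcc_disjoint_aux_zig h1 h2 hne h hk1 hk2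
  · exact maxOcc_disjoint_aux_zig h2 h1 (Ne.symm hne) h hk2 hk1

lemma maxSet_finite (L : Set (List Ordering)) (w : List Ordering) :
    {p : ℕ × ℕ | IsMaxOcc L w p.1 p.2}.Finite := by
  apply Set.Finite.subset (Set.finite_Icc (0, 0) (w.length, w.length))
  rintro ⟨i, j⟩ h
  have h1 := h.1.1
  have h2 := h.1.2.1
  simp only [Set.mem_Icc, Prod.le_def]
  omega

noncomputable def maxFinset (L : Set (List Ordering)) (w : List Ordering) : Finset (ℕ × ℕ) :=
  (maxSet_finite L w).toFinset

lemma mem_maxFinset {L : Set (List Ordering)} {w : List Ordering} {p : ℕ × ℕ} :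
    p ∈ maxFinset L w ↔ IsMaxOcc L w p.1 p.2 := by
  simp [maxFinset, Set.Finite.mem_toFinset]

lemma sumWidth_eq_sum (L : Set (List Ordering)) (wid : ℕ → ℕ → ℕ) (w : List Ordering) :
    sumWidth L wid w = ∑ p ∈ maxFinset L w, wid p.1 p.2 := by
  rw [sumWidth, ← finsum_mem_coe_finset]
  congr 1
  simp [maxFinset, Set.Finite.coe_toFinset]

noncomputable def DF (w : List Ordering) : Finset ℕ :=
  (maxFinset DecreasingSequenceLang w).biUnion (fun p => Finset.Icc p.1 (p.2 + 1))

noncomputable def ZF (w : List Ordering) : Finset ℕ :=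
  (maxFinset ZigzagLang w).biUnion (fun p => Finset.Icc (p.1 + 1) p.2)

lemma prodne {p q : ℕ × ℕ} (h : p ≠ q) : (p.1, p.2) ≠ (q.1, q.2) := by
  intro hc
  rw [Prod.mk.injEq] at hc
  exact h (Prod.ext_iff.mpr ⟨hc.1, hc.2⟩)

lemma D_card (w : List Ordering) :
    sumWidth DecreasingSequenceLang (fun i j => j - i + 2) w = (DF w).card := by
  rw [sumWidth_eq_sum, DF,
    Finset.card_biUnion (fun p hp q hq hne =>
      maxDec_disjoint (mem_maxFinset.mp hp) (mem_maxFinset.mp hq) (prodne hne))]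
  apply Finset.sum_congr rfl
  intro p hp
  have hij := (mem_maxFinset.mp hp).1.1
  rw [Nat.card_Icc]
  omega

lemma Z_card (w : List Ordering) :
    sumWidth ZigzagLang (fun i j => j - i) w = (ZF w).card := by
  rw [sumWidth_eq_sum, ZF,
    Finset.card_biUnion (fun p hp q hq hne =>
      maxZig_disjoint (mem_maxFinset.mp hp) (mem_maxFinset.mp hq) (prodne hne))]
  apply Finset.sum_congr rfl
  intro p hp
  rw [Nat.card_Icc]
  omega

lemma mem_DF_of_gt {w : List Ordering} {p : ℕ} (hp : w[p]? = some Ordering.gt) :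
    p ∈ DF w ∧ p + 1 ∈ DF w := by
  have hplen : p < w.length := (List.getElem?_eq_some_iff.mp hp).1
  have hocc : IsOcc DecreasingSequenceLang w p p :=
    isOcc_dec_iff.mpr ⟨le_rfl, hplen, hp, hp,
      fun k h1 h2 => by rw [show k = p by omega]; left; exact hp⟩
  obtain ⟨i0, j0, hmax, hle1, hle2⟩ :=
    exists_isMaxOcc (fun h' h a b => dec_restrict h' h a b) hocc
  constructor <;>
    (rw [DF, Finset.mem_biUnion];
     exact ⟨(i0, j0), mem_maxFinset.mpr hmax, Finset.mem_Icc.mpr ⟨by omega, by omega⟩⟩)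

lemma zf_pair {w : List Ordering} {k : ℕ} (hk : k ∈ ZF w) :
    1 ≤ k ∧ ((w[k - 1]? = some Ordering.lt ∧ w[k]? = some Ordering.gt) ∨
             (w[k - 1]? = some Ordering.gt ∧ w[k]? = some Ordering.lt)) := by
  rw [ZF, Finset.mem_biUnion] at hk
  obtain ⟨p, hp, hkI⟩ := hk
  rw [Finset.mem_Icc] at hkI
  have hocc := (mem_maxFinset.mp hp).1
  rw [isOcc_zig_iff] at hocc
  obtain ⟨hij, hj, halt⟩ := hocc
  have h1 : 1 ≤ k := by omega
  have := halt (k - 1) (by omega) (by omega)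
  rw [show k - 1 + 1 = k by omega] at this
  exact ⟨h1, this⟩

lemma ZF_subset_DF (w : List Ordering) : ZF w ⊆ DF w := by
  intro k hk
  obtain ⟨h1, hpair⟩ := zf_pair hk
  rcases hpair with ⟨ha, hb⟩ | ⟨ha, hb⟩
  · exact (mem_DF_of_gt hb).1
  · have := (mem_DF_of_gt ha).2
    rwa [show k - 1 + 1 = k by omega] at this

theorem main_w (w : List Ordering)
    (h : sumWidth DecreasingSequenceLang (fun i j => j - i + 2) w =
         sumWidth ZigzagLang (fun i j => j - i) w) :
    Even (sumWidth DecreasingSequenceLang (fun i j => j - i + 2) w) := by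
  classical
  rw [D_card] at h ⊢
  rw [Z_card] at h
  have heq : ZF w = DF w :=
    Finset.eq_of_subset_of_card_le (ZF_subset_DF w) (le_of_eq h)
  set G := (Finset.range w.length).filter (fun p => w[p]? = some Ordering.gt) with hG
  have hGmem : ∀ p, p ∈ G ↔ w[p]? = some Ordering.gt := by
    intro p
    rw [hG, Finset.mem_filter, Finset.mem_range]
    exact ⟨fun h => h.2, fun hp => ⟨(List.getElem?_eq_some_iff.mp hp).1, hp⟩⟩
  have hiso : ∀ p ∈ G, w[p + 1]? = some Ordering.lt := by
    intro p hp
    have hpg := (hGmem p).mp hp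
    have hmem : p + 1 ∈ ZF w := by rw [heq]; exact (mem_DF_of_gt hpg).2
    obtain ⟨-, hpair⟩ := zf_pair hmem
    rw [show p + 1 - 1 = p from rfl] at hpair
    rcases hpair with ⟨ha, hb⟩ | ⟨ha, hb⟩
    · exact absurd (hpg.symm.trans ha) (by simp)
    · exact hb
  have hDF_eq : DF w = G.biUnion (fun p => {p, p + 1}) := by
    ext k
    rw [Finset.mem_biUnion]
    constructor
    · intro hk
      have hkZ : k ∈ ZF w := by rw [heq]; exact hk
      obtain ⟨h1, hpair⟩ := zf_pair hkZ
      rcases hpair with ⟨ha, hb⟩ | ⟨ha, hb⟩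
      · exact ⟨k, (hGmem k).mpr hb, by simp⟩
      · refine ⟨k - 1, (hGmem _).mpr ha, ?_⟩
        simp only [Finset.mem_insert, Finset.mem_singleton]
        omega
    · rintro ⟨p, hp, hk⟩
      have hpg := (hGmem p).mp hp
      simp only [Finset.mem_insert, Finset.mem_singleton] at hk
      rcases hk with rfl | rfl
      · exact (mem_DF_of_gt hpg).1
      · exact (mem_DF_of_gt hpg).2
  rw [hDF_eq, Finset.card_biUnion ?disj]
  case disj =>
    intro p hp q hq hne
    rw [Function.onFun, Finset.disjoint_left]
    intro a ha hb
    simp only [Finset.mem_insert, Finset.mem_singleton] at ha hb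
    have h1 := hiso p hp
    have h2 := hiso q hq
    have hpg := (hGmem p).mp hp
    have hqg := (hGmem q).mp hq
    have hcase : q = p + 1 ∨ p = q + 1 := by
      rcases ha with rfl | rfl <;> rcases hb with h' | h' <;> omega
    rcases hcase with h' | h'
    · rw [h'] at hqg
      exact absurd (h1.symm.trans hqg) (by simp)
    · rw [h'] at hpg
      exact absurd (h2.symm.trans hpg) (by simp)
  have hc2 : ∀ p ∈ G, ({p, p + 1} : Finset ℕ).card = 2 := by
    intro p hp
    rw [Finset.card_insert_of_notMem (by simp), Finset.card_singleton]
  rw [Finset.sum_congr rfl hc2, Finset.sum_const, smul_eq_mul]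
  exact ⟨G.card, by ring⟩

/-- For every integer sequence `X`, if
`sum_width_decreasing_sequence(X) = sum_width_zigzag(X)` then this common
value is even; equivalently, there is no integer sequence `X` with
`sum_width_decreasing_sequence(X)` odd and equal to `sum_width_zigzag(X)`. -/
theorem even_of_sumWidth_eq (X : List ℤ) (hX : X ≠ [])
    (h : sumWidthDecreasingSequence X = sumWidthZigzag X) :
    Even (sumWidthDecreasingSequence X) := by
  exact main_w (signature X) h
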